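/- Fix a substitution pattern A_s ⊆ {1,...,m} with |A_s| = q_s ≥ 1, a set Δ ⊆ {1,...,m} with |Δ| = t', and an integer s ≥ 0. The number of subsets B_s ⊆ {1,...,m} of size q_s such that the symmetric difference of A_s and B_s is contained in Δ and has size at most s is at most (s+1) · C(q_s + s, q_s) · C(t' + s, s). -/

import Mathlib

lemma sum_choose_le_aux (n s : ℕ) :
    ∑ i ∈ Finset.range (s + 1), n.choose i ≤ (n + s).choose s := by
  induction s with
  | zero => simp
  | succ s ih =>
    rw [Finset.sum_range_succ]
    calc ∑ i ∈ Finset.range (s + 1), n.choose i + n.choose (s + 1)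
        ≤ (n + s).choose s + (n + s).choose (s + 1) := by
          gcongr
          exact Nat.le_add_right n s
      _ = (n + (s + 1)).choose (s + 1) := by
          rw [← Nat.add_assoc]
          exact (Nat.choose_succ_succ (n + s) s).symm

lemma card_powerset_filter_le {m : ℕ} (A : Finset (Fin m)) (s : ℕ) :
    (A.powerset.filter (fun S => S.card ≤ s)).card ≤ (A.card + s).choose s := by
  have h : A.powerset.filter (fun S => S.card ≤ s)
      = (Finset.range (s + 1)).biUnion (fun i => Finset.powersetCard i A) := by
    ext S
    simp only [Finset.mem_filter, Finset.mem_powerset, Finset.mem_biUnion,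
      Finset.mem_range, Finset.mem_powersetCard, Nat.lt_succ_iff]
    constructor
    · rintro ⟨h1, h2⟩; exact ⟨S.card, h2, h1, rfl⟩
    · rintro ⟨i, hi, h1, rfl⟩; exact ⟨h1, hi⟩
  rw [h, Finset.card_biUnion]
  · simp only [Finset.card_powersetCard]
    exact sum_choose_le_aux A.card s
  · intro i _ j _ hij
    simp only [Finset.disjoint_left, Finset.mem_powersetCard]
    rintro S ⟨_, rfl⟩ ⟨_, h⟩
    exact hij h

/-- Counting substitution patterns with symmetric difference of size at most `s`:
the number of size-`q_s` subsets `B_s` of `{1,…,m}` whose symmetric difference with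
`A_s` is contained in `Δ` and has size at most `s` is at most
`(s+1)·C(q_s+s, q_s)·C(t'+s, s)`. -/
theorem stmt_5 {m : ℕ} (A_s Δ : Finset (Fin m)) (q_s t' s : ℕ)
    (hq : 1 ≤ q_s) (hA : A_s.card = q_s) (hΔ : Δ.card = t') :
    Nat.card {B_s : Finset (Fin m) // B_s.card = q_s ∧
        symmDiff A_s B_s ⊆ Δ ∧ (symmDiff A_s B_s).card ≤ s}
      ≤ (s + 1) * Nat.choose (q_s + s) q_s * Nat.choose (t' + s) s := by
  classical
  set X : Finset (Finset (Fin m) × Finset (Fin m)) :=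
    (A_s.powerset.filter (fun S => S.card ≤ s)) ×ˢ
    (Δ.powerset.filter (fun S => S.card ≤ s)) with hX
  have hsymm : ∀ B : Finset (Fin m), symmDiff A_s B = (A_s \ B) ∪ (B \ A_s) := by
    intro B; rfl
  -- injection
  have key : Nat.card {B_s : Finset (Fin m) // B_s.card = q_s ∧
        symmDiff A_s B_s ⊆ Δ ∧ (symmDiff A_s B_s).card ≤ s} ≤ Nat.card X := by
    apply Nat.card_le_card_of_injective
      (f := fun B => (⟨(A_s \ B.1, B.1 \ A_s), by
        obtain ⟨B, hcard, hsub, hle⟩ := B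
        simp only [hX, Finset.mem_product, Finset.mem_filter, Finset.mem_powerset]
        rw [hsymm] at hsub hle
        refine ⟨⟨Finset.sdiff_subset, ?_⟩, ⟨?_, ?_⟩⟩
        · exact le_trans (Finset.card_le_card Finset.subset_union_left) hle
        · exact fun x hx => hsub (Finset.mem_union_right _ hx)
        · exact le_trans (Finset.card_le_card Finset.subset_union_right) hle⟩ : X))
    rintro ⟨B₁, h₁⟩ ⟨B₂, h₂⟩ h
    simp only [Subtype.mk.injEq, Prod.mk.injEq] at h
    obtain ⟨ha, hb⟩ := h
    ext x
    have e1 := Finset.ext_iff.mp ha x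
    have e2 := Finset.ext_iff.mp hb x
    simp only [Finset.mem_sdiff] at e1 e2
    by_cases hx : x ∈ A_s <;> tauto
  refine le_trans key ?_
  have hXcard : Nat.card X = X.card := Nat.card_eq_finsetCard X
  rw [hXcard, hX, Finset.card_product]
  calc (A_s.powerset.filter (fun S => S.card ≤ s)).card *
        (Δ.powerset.filter (fun S => S.card ≤ s)).card
      ≤ (q_s + s).choose s * (t' + s).choose s := by
        apply Nat.mul_le_mul
        · have := card_powerset_filter_le A_s s; rwa [hA] at this
        · have := card_powerset_filter_le Δ s; rwa [hΔ] at this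
    _ = (q_s + s).choose q_s * (t' + s).choose s := by
        rw [Nat.add_comm q_s s, Nat.choose_symm_add]
    _ ≤ (s + 1) * (q_s + s).choose q_s * (t' + s).choose s := by
        apply Nat.mul_le_mul_right
        exact Nat.le_mul_of_pos_left _ (Nat.succ_pos s)
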